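/- Every finite-dimensional representation of the equioriented A_m quiver (vertices 1,…,m with arrows i → i+1) over a field decomposes as a direct sum of indecomposable representations whose dimension vectors are interval vectors (0,…,0,1,…,1,0,…,0), and in each such indecomposable all maps between adjacent nonzero vertices are isomorphisms (identities after choosing bases). -/

import Mathlib

open Submodule Set

universe u

section Greedy
variable {K : Type*} [Field K] {U : Type*} [AddCommGroup U] [Module K U]

theorem exists_greedy {ι ρ : Type*} [LinearOrder ρ] (r : ι → ρ) (hr : Function.Injective r)
    (s : Finset ι) (u : ι → U) :
    ∃ T : Finset ι, T ⊆ s ∧ Set.InjOn u T ∧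
      (LinearIndependent K fun x : (u '' (T : Set ι)) => (x : U)) ∧
      ∀ j ∈ s, j ∉ T → u j ∈ span K (u '' {j' | j' ∈ T ∧ r j' < r j}) := by
  classical
  induction s using Finset.strongInductionOn with
  | _ s ih =>
    rcases eq_or_ne s ∅ with rfl | hne
    · exact ⟨∅, by simp, by simp [Set.InjOn], by simp [linearIndependent_empty_type,
        Set.image_empty], by simp⟩
    · have hsne : s.Nonempty := Finset.nonempty_of_ne_empty hne
      obtain ⟨jm, hjms, hjmax⟩ := s.exists_max_image r hsne
      obtain ⟨T', hT's, hinj', hli', hsp'⟩ := ih (s.erase jm) (Finset.erase_ssubset hjms)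
      have hT'lt : ∀ j ∈ T', r j < r jm := by
        intro j hj
        have hjs := hT's hj
        have h1 := hjmax j (Finset.mem_of_mem_erase hjs)
        refine lt_of_le_of_ne h1 (fun h2 => ?_)
        exact Finset.ne_of_mem_erase hjs (hr h2)
      by_cases hm : u jm ∈ span K (u '' (T' : Set ι))
      · refine ⟨T', fun j hj => Finset.mem_of_mem_erase (hT's hj), hinj', hli', ?_⟩
        intro j hjs hjT
        rcases eq_or_ne j jm with rfl | hne2
        · have hset : {j' | j' ∈ T' ∧ r j' < r j} = (T' : Set ι) := by
            ext j'
            exact ⟨fun h => h.1, fun h => ⟨h, hT'lt _ h⟩⟩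
          rw [hset]; exact hm
        · exact hsp' j (Finset.mem_erase.mpr ⟨hne2, hjs⟩) hjT
      · refine ⟨insert jm T', ?_, ?_, ?_, ?_⟩
        · intro j hj
          rcases Finset.mem_insert.mp hj with rfl | hj
          · exact hjms
          · exact Finset.mem_of_mem_erase (hT's hj)
        · intro x hx y hy hxy
          simp only [Finset.coe_insert, Set.mem_insert_iff, Finset.mem_coe] at hx hy
          rcases hx with rfl | hx <;> rcases hy with rfl | hy
          · rfl
          · exact absurd (subset_span (by rw [hxy]; exact Set.mem_image_of_mem u hy)) hm
          · exact absurd (subset_span (by rw [← hxy]; exact Set.mem_image_of_mem u hx)) hm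
          · exact hinj' hx hy hxy
        · have : (u '' ((insert jm T' : Finset ι) : Set ι)) = insert (u jm) (u '' (T' : Set ι)) := by
            simp [Set.image_insert_eq]
          rw [this]
          exact LinearIndepOn.id_insert (s := u '' (T' : Set ι)) hli' hm
        · intro j hjs hjT
          rcases eq_or_ne j jm with rfl | hne2
          · exact absurd (Finset.mem_insert_self j T') hjT
          · have hj' : u j ∈ span K (u '' {j' | j' ∈ T' ∧ r j' < r j}) :=
              hsp' j (Finset.mem_erase.mpr ⟨hne2, hjs⟩) (fun h => hjT (Finset.mem_insert_of_mem h))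
            refine span_mono (Set.image_mono ?_) hj'
            intro j' hj'2
            exact ⟨Finset.mem_insert_of_mem hj'2.1, hj'2.2⟩

theorem isInternal_span_singleton {ι : Type*} [Fintype ι] [DecidableEq ι] (x : ι → U)
    (h1 : ∀ c : ι → K, ∑ j, c j • x j = 0 → ∀ j, x j ≠ 0 → c j = 0)
    (h2 : ⊤ ≤ span K (Set.range x)) :
    DirectSum.IsInternal (fun j => span K {x j}) := by
  rw [DirectSum.isInternal_submodule_iff_iSupIndep_and_iSup_eq_top]
  constructor
  · rw [iSupIndep_def]
    intro j
    rw [disjoint_def]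
    intro y hy hy2
    rcases mem_span_singleton.mp hy with ⟨c, rfl⟩
    by_cases hxj : x j = 0
    · simp [hxj]
    · have : (⨆ k, ⨆ (_ : k ≠ j), span K {x k}) = span K (Set.range fun k : {k // k ≠ j} => x k) := by
        rw [span_range_eq_iSup, iSup_subtype]
      rw [this] at hy2
      rcases (mem_span_range_iff_exists_fun K).mp hy2 with ⟨c', hc'⟩
      -- build the full coefficient function
      set C : ι → K := fun k => if h : k = j then c else - c' ⟨k, h⟩ with hC
      have hsum : ∑ k, C k • x k = 0 := by
        rw [Fintype.sum_eq_add_sum_compl j]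
        have h1' : C j • x j = c • x j := by simp [hC]
        have h2' : ∑ k ∈ {j}ᶜ, C k • x k = - (c • x j) := by
          rw [Finset.sum_subtype (p := fun k => k ≠ j) (s := {j}ᶜ) (fun k => by simp) (fun k => C k • x k)]
          rw [← hc', ← Finset.sum_neg_distrib]
          apply Finset.sum_congr rfl
          intro k _
          simp [hC, k.2]
        rw [h1', h2', add_neg_cancel]
      have := h1 C hsum j hxj
      simp [hC] at this
      simp [this]
  · rw [← span_range_eq_iSup]
    exact le_antisymm le_top h2

theorem exists_complement_family {ι : Type*} [Fintype ι] [DecidableEq ι]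
    {U : Type*} [AddCommGroup U] [Module K U] [FiniteDimensional K U]
    (T : Finset ι) (u : ι → U)
    (hinj : Set.InjOn u T)
    (hli : LinearIndependent K fun x : (u '' (T : Set ι)) => (x : U)) :
    ∃ (p : ℕ) (w : Fin p → U),
      (∀ k, w k ≠ 0) ∧
      (∀ c : ι ⊕ Fin p → K,
        (∑ j, c (Sum.inl j) • (if j ∈ T then u j else 0)) + (∑ k, c (Sum.inr k) • w k) = 0 →
        (∀ j ∈ T, c (Sum.inl j) = 0) ∧ ∀ k, c (Sum.inr k) = 0) ∧
      ⊤ ≤ span K (Set.range (Sum.elim (fun j => if j ∈ T then u j else 0) w)) := by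
  classical
  set P : Submodule K U := span K (u '' (T : Set ι)) with hP
  obtain ⟨q, hq⟩ := Submodule.exists_isCompl P
  set bq := Module.finBasis K q with hbq
  refine ⟨Module.finrank K q, fun k => (bq k : U), ?_, ?_, ?_⟩
  · intro k
    simpa using bq.ne_zero k
  · intro c hc
    set A := ∑ j, c (Sum.inl j) • (if j ∈ T then u j else 0) with hA
    set B := ∑ k, c (Sum.inr k) • ((bq k : U)) with hB
    have hAmem : A ∈ P := by
      apply Submodule.sum_mem
      intro j _
      by_cases hj : j ∈ T
      · simp only [hj, if_pos]
        exact Submodule.smul_mem _ _ (subset_span (Set.mem_image_of_mem u hj))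
      · simp [hj]
    have hBq : B = ((∑ k, c (Sum.inr k) • bq k : q) : U) := by
      push_cast
      rfl
    have hBmem : B ∈ q := by rw [hBq]; exact ((∑ k, c (Sum.inr k) • bq k : q)).2
    have hA0 : A = 0 ∧ B = 0 := by
      have h1 : A = -B := by rw [eq_neg_iff_add_eq_zero]; exact hc
      have hAq : A ∈ q := by rw [h1]; exact q.neg_mem hBmem
      have hA0' : A = 0 := Submodule.disjoint_def.mp hq.disjoint A hAmem hAq
      refine ⟨hA0', ?_⟩
      rw [hA0', zero_add] at hc
      exact hc
    obtain ⟨hA0', hB0⟩ := hA0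
    constructor
    · -- coefficients on T vanish
      have hsub : ∑ j ∈ T, c (Sum.inl j) • u j = 0 := by
        rw [← hA0', hA,
          ← Finset.sum_subset (Finset.subset_univ T) (fun x _ hx => by simp [hx])]
        apply Finset.sum_congr rfl
        intro j hj
        simp [hj]
      -- convert to subtype family
      have hsub2 : ∑ j : {x // x ∈ T}, c (Sum.inl j) • u j = 0 := by
        rw [← hsub]
        exact (Finset.sum_subtype T (by simp) fun j => c (Sum.inl j) • u j).symm
      have hfam : LinearIndependent K fun j : {x // x ∈ T} => u j := by
        have hgi : Function.Injective
            (fun j : {x // x ∈ T} => (⟨u j, Set.mem_image_of_mem u j.2⟩ : (u '' (T : Set ι)))) := by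
          intro x y hxy
          have : u x = u y := congrArg Subtype.val hxy
          exact Subtype.ext (hinj x.2 y.2 this)
        exact hli.comp _ hgi
      intro j hj
      exact (Fintype.linearIndependent_iff.mp hfam) _ hsub2 ⟨j, hj⟩
    · have hq0 : (∑ k, c (Sum.inr k) • bq k : q) = 0 := by
        have := hB0
        rw [hBq] at this
        exact_mod_cast this
      intro k
      exact (Fintype.linearIndependent_iff.mp bq.linearIndependent) _ hq0 k
  · -- spanning
    have hPle : P ≤ span K (Set.range (Sum.elim (fun j => if j ∈ T then u j else 0) (fun k => (bq k : U)))) := by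
      rw [hP, span_le]
      rintro x ⟨j, hj, rfl⟩
      apply subset_span
      exact ⟨Sum.inl j, by simp [Finset.mem_coe.mp hj]⟩
    have hqle : q ≤ span K (Set.range (Sum.elim (fun j => if j ∈ T then u j else 0) (fun k => (bq k : U)))) := by
      intro x hx
      have : x ∈ Submodule.map q.subtype ⊤ := by
        simp [Submodule.map_subtype_top]
        exact hx
      rw [← bq.span_eq, Submodule.map_span] at this
      refine span_mono ?_ this
      rintro y ⟨z, ⟨k, rfl⟩, rfl⟩
      exact ⟨Sum.inr k, rfl⟩
    calc ⊤ = P ⊔ q := hq.sup_eq_top.symm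
    _ ≤ _ := sup_le hPle hqle

end Greedy

theorem chains_exist {K : Type*} [Field K] :
    ∀ (m : ℕ) (V : Fin (m+1) → Type u) [∀ i, AddCommGroup (V i)]
      [∀ i, Module K (V i)] [∀ i, FiniteDimensional K (V i)]
      (f : ∀ i : Fin m, V i.castSucc →ₗ[K] V i.succ),
    ∃ (n : ℕ) (a b : Fin n → Fin (m+1)) (v : Fin n → ∀ i, V i),
      (∀ j, a j ≤ b j) ∧
      (∀ j i, ¬(a j ≤ i ∧ i ≤ b j) → v j i = 0) ∧
      (∀ j i, a j ≤ i → i ≤ b j → v j i ≠ 0) ∧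
      (∀ j (i : Fin m), a j ≤ i.castSucc → f i (v j i.castSucc) = v j i.succ) ∧
      (∀ (i) (c : Fin n → K), (∑ j, c j • v j i) = 0 → ∀ j, v j i ≠ 0 → c j = 0) ∧
      (∀ i, ⊤ ≤ span K (Set.range fun j => v j i)) := by
  intro m
  induction m with
  | zero =>
    intro V _ _ _ f
    set bb := Module.finBasis K (V 0) with hbb
    refine ⟨Module.finrank K (V 0), fun _ => 0, fun _ => 0,
      fun j i => Fin.cases (bb j) (fun i' => i'.elim0) i, ?_, ?_, ?_, ?_, ?_, ?_⟩
    · intro j; exact le_refl _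
    · intro j i h
      exact absurd ⟨Fin.zero_le i, by omega⟩ h
    · intro j i _ _
      have hi : i = 0 := Fin.ext (by omega)
      subst hi
      simpa using bb.ne_zero j
    · intro j i
      exact i.elim0
    · intro i c hc j hj
      have hi : i = 0 := Fin.ext (by omega)
      subst hi
      simp only [Fin.cases_zero] at hc
      exact Fintype.linearIndependent_iff.mp bb.linearIndependent c hc j
    · intro i
      have hi : i = 0 := Fin.ext (by omega)
      subst hi
      simpa using bb.span_eq.ge
  | succ m ih =>
    intro V _ _ _ f
    classical
    obtain ⟨n, a, b, v, hab, hv0, hvne, hchain, hindep, hspan⟩ :=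
      ih (fun i : Fin (m+1) => V i.castSucc) (fun i : Fin m => f i.castSucc)
    have hchain' : ∀ (j : Fin n) (i : Fin m), a j ≤ i.castSucc →
        f i.castSucc (v j i.castSucc) = v j i.succ := hchain
    set u : Fin n → V (Fin.last (m+1)) := fun j => f (Fin.last m) (v j (Fin.last m)) with hu_def
    -- a lexicographic order on the index type, refining comparison of left endpoints
    set key : Fin n → Lex (Fin (m+1) × Fin n) := fun j => toLex (a j, j) with hkey
    have hkeyinj : Function.Injective key := by
      intro x y h
      have h2 := congrArg (fun z => (ofLex z).2) h
      exact h2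
    have hlt : ∀ x y : Fin n, key x < key y → a x ≤ a y := by
      intro x y h
      rcases Prod.Lex.lt_iff.mp h with h3 | h3
      · exact le_of_lt h3
      · exact le_of_eq h3.1
    obtain ⟨T, -, hinjT, hliT, hspT⟩ := exists_greedy (K := K) key hkeyinj Finset.univ u
    have hTu : ∀ j ∈ T, u j ≠ 0 := by
      intro j hj
      exact hliT.ne_zero ⟨u j, Set.mem_image_of_mem u (Finset.mem_coe.mpr hj)⟩
    have hbju : ∀ j, u j ≠ 0 → b j = Fin.last m := by
      intro j hju
      have hvl : v j (Fin.last m) ≠ 0 := by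
        intro h
        apply hju
        rw [hu_def]
        simp [h]
      by_contra hb
      exact hvl (hv0 j (Fin.last m) (fun hcon => hb (Fin.last_le_iff.mp hcon.2)))
    have hE : ∀ j : Fin n, ∃ E : Fin n → K,
        (∀ j', E j' ≠ 0 → j' ∈ T ∧ a j' ≤ a j) ∧
        (j ∉ T → u j ≠ 0 → u j = ∑ j', E j' • u j') ∧
        ((j ∈ T ∨ u j = 0) → E = 0) := by
      intro j
      by_cases hcase : j ∉ T ∧ u j ≠ 0
      · obtain ⟨l, hlsupp, hlsum⟩ := (Finsupp.mem_span_image_iff_linearCombination K).mp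
          (hspT j (Finset.mem_univ j) hcase.1)
        refine ⟨l, ?_, ?_, ?_⟩
        · intro j' hne
          have hmem : j' ∈ {j' | j' ∈ T ∧ key j' < key j} := hlsupp (Finsupp.mem_support_iff.mpr hne)
          exact ⟨hmem.1, hlt _ _ hmem.2⟩
        · intro _ _
          rw [← hlsum, Finsupp.linearCombination_apply, Finsupp.sum_fintype]
          simp
        · rintro (h | h)
          · exact absurd h hcase.1
          · exact absurd h hcase.2
      · refine ⟨0, by simp, ?_, fun _ => rfl⟩
        intro h1 h2
        exact absurd ⟨h1, h2⟩ hcase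
    choose E hEsupp hEsum hEzero using hE
    have hEdiag : ∀ j, E j j = 0 := by
      intro j
      by_cases hjT : j ∈ T
      · exact congrFun (hEzero j (Or.inl hjT)) j
      · by_cases hEj : E j j = 0
        · exact hEj
        · exact absurd (hEsupp j j hEj).1 hjT
    have hET : ∀ j, j ∈ T → E j = 0 := fun j hj => hEzero j (Or.inl hj)
    have hEnotT : ∀ j j', E j j' ≠ 0 → j ∉ T ∧ u j ≠ 0 := by
      intro j j' hne
      constructor
      · intro h; exact hne (congrFun (hET j h) j')
      · intro h; exact hne (congrFun (hEzero j (Or.inr h)) j')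
    -- the modified chain vectors
    set d : ∀ _ : Fin n, ∀ i : Fin (m+1), V i.castSucc :=
      fun j i => if a j ≤ i then v j i - ∑ j', E j j' • v j' i else 0 with hd_def
    have hd0 : ∀ j i, ¬ a j ≤ i → d j i = 0 := by
      intro j i h; rw [hd_def]; simp [h]
    have hdpos : ∀ j i, a j ≤ i → d j i = v j i - ∑ j', E j j' • v j' i := by
      intro j i h; rw [hd_def]; simp [h]
    have hd3 : ∀ j i, ¬(a j ≤ i ∧ i ≤ b j) → d j i = 0 := by
      intro j i h
      by_cases hai : a j ≤ i
      · by_cases hu : u j = 0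
        · rw [hdpos j i hai, hv0 j i h, hEzero j (Or.inr hu)]
          simp
        · exact absurd ⟨hai, (hbju j hu) ▸ Fin.le_last i⟩ h
      · exact hd0 j i hai
    have hd2 : ∀ j i, a j ≤ i → i ≤ b j → d j i ≠ 0 := by
      intro j i h1 h2 hdz
      rw [hdpos j i h1] at hdz
      have hsum0 : ∑ k, ((if k = j then (1:K) else 0) - E j k) • v k i = 0 := by
        have e1 : ∀ k, ((if k = j then (1:K) else 0) - E j k) • v k i
            = (if k = j then (1:K) else 0) • v k i - E j k • v k i := fun k => sub_smul _ _ _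
        rw [Finset.sum_congr rfl (fun k _ => e1 k), Finset.sum_sub_distrib]
        have e2 : ∑ k, (if k = j then (1:K) else 0) • v k i = v j i := by
          simp [ite_smul]
        rw [e2]
        exact hdz
      have := hindep i _ hsum0 j (hvne j i h1 h2)
      rw [if_pos rfl, hEdiag j, sub_zero] at this
      exact one_ne_zero this
    have hd4 : ∀ j (i : Fin m), a j ≤ i.castSucc →
        f i.castSucc (d j i.castSucc) = d j i.succ := by
      intro j i hai
      have hai2 : a j ≤ i.succ := le_trans hai (le_of_lt (Fin.castSucc_lt_succ (i := i)))
      rw [hdpos _ _ hai, hdpos _ _ hai2, map_sub, hchain' j i hai, map_sum]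
      congr 1
      apply Finset.sum_congr rfl
      intro j' _
      rw [map_smul]
      by_cases hE' : E j j' = 0
      · simp [hE']
      · have haj' : a j' ≤ i.castSucc := le_trans (hEsupp j j' hE').2 hai
        rw [hchain' j' i haj']
    have hd5 : ∀ j, f (Fin.last m) (d j (Fin.last m)) = if j ∈ T then u j else 0 := by
      intro j
      have hueq : ∀ j', f (Fin.last m) (v j' (Fin.last m)) = u j' := fun j' => rfl
      rw [hdpos j (Fin.last m) (Fin.le_last _), map_sub, map_sum, hueq]
      have e1 : ∀ j', f (Fin.last m) (E j j' • v j' (Fin.last m)) = E j j' • u j' := by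
        intro j'
        rw [map_smul, hueq]
      rw [Finset.sum_congr rfl (fun j' _ => e1 j')]
      by_cases hjT : j ∈ T
      · rw [if_pos hjT, hET j hjT]
        simp
      · rw [if_neg hjT]
        by_cases hu : u j = 0
        · rw [hEzero j (Or.inr hu)]
          simp [hu]
        · exact sub_eq_zero.mpr (hEsum j hjT hu)
    obtain ⟨p, w, hwne, hcoef, hsptop⟩ := exists_complement_family (K := K) T u hinjT hliT
    set v' : (Fin n ⊕ Fin p) → ∀ i : Fin (m+2), V i :=
      Sum.elim (fun j => Fin.lastCases (motive := fun i => V i) (if j ∈ T then u j else 0) (d j))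
        (fun k => Fin.lastCases (motive := fun i => V i) (w k) (fun _ => 0)) with hv'_def
    set a' : (Fin n ⊕ Fin p) → Fin (m+2) :=
      Sum.elim (fun j => (a j).castSucc) (fun _ => Fin.last (m+1)) with ha'_def
    set b' : (Fin n ⊕ Fin p) → Fin (m+2) :=
      Sum.elim (fun j => if j ∈ T then Fin.last (m+1) else (b j).castSucc)
        (fun _ => Fin.last (m+1)) with hb'_def
    have hv'c : ∀ (z : Fin n ⊕ Fin p) (i₀ : Fin (m+1)),
        v' z i₀.castSucc = Sum.elim (fun j => d j i₀) (fun _ => (0 : V i₀.castSucc)) z := by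
      rintro (j | k) i₀ <;> simp [hv'_def]
    have hv't : ∀ z, v' z (Fin.last (m+1)) =
        Sum.elim (fun j => if j ∈ T then u j else 0) w z := by
      rintro (j | k) <;> simp [hv'_def]
    have hC1 : ∀ z, a' z ≤ b' z := by
      rintro (j | k)
      · simp only [ha'_def, hb'_def, Sum.elim_inl]
        by_cases hjT : j ∈ T
        · rw [if_pos hjT]; exact Fin.le_last _
        · rw [if_neg hjT]; exact Fin.castSucc_le_castSucc_iff.mpr (hab j)
      · simp [ha'_def, hb'_def]
    have hC2 : ∀ z i, ¬(a' z ≤ i ∧ i ≤ b' z) → v' z i = 0 := by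
      intro z i h
      induction i using Fin.lastCases with
      | last =>
        rcases z with j | k
        · rw [hv't]; simp only [Sum.elim_inl]
          rw [if_neg]
          intro hjT
          exact h ⟨by simp [ha'_def, Fin.le_last], by simp [hb'_def, hjT]⟩
        · exact absurd ⟨by simp [ha'_def], by simp [hb'_def]⟩ h
      | cast i₀ =>
        rcases z with j | k
        · rw [hv'c]; simp only [Sum.elim_inl]
          apply hd3
          rintro ⟨h1, h2⟩
          apply h
          constructor
          · simp only [ha'_def, Sum.elim_inl]
            exact Fin.castSucc_le_castSucc_iff.mpr h1
          simp only [hb'_def, Sum.elim_inl]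
          by_cases hjT : j ∈ T
          · rw [if_pos hjT]; exact Fin.le_last _
          · rw [if_neg hjT]; exact Fin.castSucc_le_castSucc_iff.mpr h2
        · rw [hv'c]; simp
    have hC3 : ∀ z i, a' z ≤ i → i ≤ b' z → v' z i ≠ 0 := by
      intro z i h1 h2
      induction i using Fin.lastCases with
      | last =>
        rcases z with j | k
        · rw [hv't]; simp only [Sum.elim_inl]
          have hjT : j ∈ T := by
            by_contra hjT
            rw [hb'_def] at h2
            simp only [Sum.elim_inl, if_neg hjT] at h2
            exact absurd (Fin.last_le_iff.mp h2) (Fin.ne_of_lt (Fin.castSucc_lt_last (b j)))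
          rw [if_pos hjT]
          exact hTu j hjT
        · rw [hv't]; exact hwne k
      | cast i₀ =>
        rcases z with j | k
        · rw [hv'c]; simp only [Sum.elim_inl]
          rw [ha'_def] at h1; simp only [Sum.elim_inl] at h1
          have h1' : a j ≤ i₀ := Fin.castSucc_le_castSucc_iff.mp h1
          have h2' : i₀ ≤ b j := by
            rw [hb'_def] at h2; simp only [Sum.elim_inl] at h2
            by_cases hjT : j ∈ T
            · have hb := hbju j (hTu j hjT)
              rw [hb]; exact Fin.le_last i₀
            · rw [if_neg hjT] at h2
              exact Fin.castSucc_le_castSucc_iff.mp h2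
          exact hd2 j i₀ h1' h2'
        · rw [ha'_def] at h1; simp only [Sum.elim_inr] at h1
          exact absurd h1 (Fin.not_le.mpr (Fin.castSucc_lt_last i₀))
    have hC4 : ∀ z (i : Fin (m+1)), a' z ≤ i.castSucc →
        f i (v' z i.castSucc) = v' z i.succ := by
      intro z i hle
      induction i using Fin.lastCases with
      | last =>
        rcases z with j | k
        · have e1 : v' (Sum.inl j) ((Fin.last m).castSucc) = d j (Fin.last m) := by
            rw [hv'c]; rfl
          have e2 : v' (Sum.inl j) ((Fin.last m).succ) = if j ∈ T then u j else 0 := by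
            show v' (Sum.inl j) (Fin.last (m+1)) = _
            rw [hv't]; rfl
          rw [e1, e2, hd5 j]
        · rw [ha'_def] at hle; simp only [Sum.elim_inr] at hle
          exact absurd hle (Fin.not_le.mpr (Fin.castSucc_lt_last (Fin.last m)))
      | cast i₀ =>
        rcases z with j | k
        · have e1 : v' (Sum.inl j) ((i₀.castSucc).castSucc) = d j i₀.castSucc := by
            rw [hv'c]; rfl
          have e2 : v' (Sum.inl j) ((i₀.castSucc).succ) = d j i₀.succ := by
            show v' (Sum.inl j) ((i₀.succ).castSucc) = d j i₀.succ
            rw [hv'c]; rfl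
          rw [e1, e2]
          apply hd4
          rw [ha'_def] at hle; simp only [Sum.elim_inl] at hle
          exact Fin.castSucc_le_castSucc_iff.mp hle
        · rw [ha'_def] at hle; simp only [Sum.elim_inr] at hle
          exact absurd hle (Fin.not_le.mpr (Fin.castSucc_lt_last _))
    have hC5 : ∀ (i : Fin (m+2)) (c : Fin n ⊕ Fin p → K),
        (∑ z, c z • v' z i) = 0 → ∀ z, v' z i ≠ 0 → c z = 0 := by
      intro i c hsum z hz
      induction i using Fin.lastCases with
      | last =>
        rw [Fintype.sum_sum_type] at hsum
        simp only [hv't, Sum.elim_inl, Sum.elim_inr] at hsum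
        obtain ⟨hT0, hp0⟩ := hcoef c hsum
        rcases z with j | k
        · rw [hv't] at hz; simp only [Sum.elim_inl] at hz
          by_cases hjT : j ∈ T
          · exact hT0 j hjT
          · rw [if_neg hjT] at hz; exact absurd rfl hz
        · exact hp0 k
      | cast i₀ =>
        rw [Fintype.sum_sum_type] at hsum
        simp only [hv'c, Sum.elim_inl, Sum.elim_inr, smul_zero, Finset.sum_const_zero,
          add_zero] at hsum
        set cc : Fin n → K := fun j => if a j ≤ i₀ then c (Sum.inl j) else 0 with hcc
        have key2 : ∑ j', (cc j' - ∑ j2, cc j2 * E j2 j') • v j' i₀ = 0 := by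
          have e1 : ∀ j2, c (Sum.inl j2) • d j2 i₀
              = cc j2 • v j2 i₀ - ∑ j', (cc j2 * E j2 j') • v j' i₀ := by
            intro j2
            by_cases hj2 : a j2 ≤ i₀
            · rw [hdpos j2 i₀ hj2, hcc]
              simp only [if_pos hj2]
              rw [smul_sub, Finset.smul_sum]
              congr 1
              apply Finset.sum_congr rfl
              intro j' _
              rw [smul_smul]
            · rw [hd0 j2 i₀ hj2, hcc]
              simp [hj2]
          rw [Finset.sum_congr rfl (fun j2 _ => e1 j2), Finset.sum_sub_distrib,
            Finset.sum_comm] at hsum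
          have e2 : ∀ j', ∑ j2, (cc j2 * E j2 j') • v j' i₀
              = (∑ j2, cc j2 * E j2 j') • v j' i₀ :=
            fun j' => (Finset.sum_smul).symm
          rw [Finset.sum_congr rfl (fun j' _ => e2 j'), ← Finset.sum_sub_distrib] at hsum
          rw [Finset.sum_congr rfl (fun j' _ => sub_smul (cc j') _ (v j' i₀))]
          exact hsum
        have hrel : ∀ j', v j' i₀ ≠ 0 → cc j' = ∑ j2, cc j2 * E j2 j' := by
          intro j' hne
          exact sub_eq_zero.mp (hindep i₀ _ key2 j' hne)
        have step1 : ∀ j2, j2 ∉ T → v j2 i₀ ≠ 0 → cc j2 = 0 := by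
          intro j2 hjT hne
          rw [hrel j2 hne]
          apply Finset.sum_eq_zero
          intro j3 _
          by_cases hE3 : E j3 j2 = 0
          · rw [hE3, mul_zero]
          · exact absurd (hEsupp j3 j2 hE3).1 hjT
        have step2 : ∀ j2, v j2 i₀ ≠ 0 → cc j2 = 0 := by
          intro j2 hne
          by_cases hjT : j2 ∈ T
          · rw [hrel j2 hne]
            apply Finset.sum_eq_zero
            intro j3 _
            by_cases hE3 : E j3 j2 = 0
            · rw [hE3, mul_zero]
            · obtain ⟨hj3T, hu3⟩ := hEnotT j3 j2 hE3
              by_cases hai3 : a j3 ≤ i₀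
              · have hb3 : b j3 = Fin.last m := hbju j3 hu3
                have hvne3 : v j3 i₀ ≠ 0 := hvne j3 i₀ hai3 (hb3 ▸ Fin.le_last i₀)
                rw [step1 j3 hj3T hvne3, zero_mul]
              · rw [hcc]; simp [hai3]
          · exact step1 j2 hjT hne
        rcases z with j | k
        · rw [hv'c] at hz; simp only [Sum.elim_inl] at hz
          have h1 : a j ≤ i₀ := by
            by_contra hcon
            exact hz (hd0 j i₀ hcon)
          have h2 : i₀ ≤ b j := by
            by_contra hcon
            exact hz (hd3 j i₀ (fun hx => hcon hx.2))
          have hccj := step2 j (hvne j i₀ h1 h2)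
          rw [hcc] at hccj; simp only [if_pos h1] at hccj
          exact hccj
        · rw [hv'c] at hz; simp only [Sum.elim_inr] at hz
          exact absurd rfl hz
    have hC6 : ∀ i, ⊤ ≤ span K (Set.range fun z => v' z i) := by
      intro i
      induction i using Fin.lastCases with
      | last =>
        have he : (fun z => v' z (Fin.last (m+1)))
            = Sum.elim (fun j => if j ∈ T then u j else 0) w := by
          funext z
          rw [hv't]
        rw [he]
        exact hsptop
      | cast i₀ =>
        refine le_trans (hspan i₀) (span_le.mpr ?_)
        rintro x ⟨j, rfl⟩
        show v j i₀ ∈ (span K (Set.range fun z => v' z i₀.castSucc) : Set _)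
        by_cases hai : a j ≤ i₀
        · have hexp : v j i₀ = d j i₀ + ∑ j', E j j' • d j' i₀ := by
            have e1 : ∑ j', E j j' • d j' i₀ = ∑ j', E j j' • v j' i₀ := by
              apply Finset.sum_congr rfl
              intro j' _
              by_cases hE' : E j j' = 0
              · rw [hE']; simp
              · have hj'T := (hEsupp j j' hE').1
                have haj' : a j' ≤ i₀ := le_trans (hEsupp j j' hE').2 hai
                rw [hdpos j' i₀ haj', hET j' hj'T]
                simp
            rw [e1, hdpos j i₀ hai, sub_add_cancel]
          rw [hexp]
          refine add_mem (subset_span ⟨Sum.inl j, ?_⟩)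
            (sum_mem fun j' _ => smul_mem _ _ (subset_span ⟨Sum.inl j', ?_⟩))
          · show v' (Sum.inl j) i₀.castSucc = d j i₀
            rw [hv'c]; rfl
          · show v' (Sum.inl j') i₀.castSucc = d j' i₀
            rw [hv'c]; rfl
        · have hz : v j i₀ = 0 := hv0 j i₀ (fun hx => hai hx.1)
          rw [hz]
          exact zero_mem _
    refine ⟨n + p, fun j => a' (finSumFinEquiv.symm j), fun j => b' (finSumFinEquiv.symm j),
      fun j => v' (finSumFinEquiv.symm j), ?_, ?_, ?_, ?_, ?_, ?_⟩
    · intro j; exact hC1 _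
    · intro j i h; exact hC2 _ i h
    · intro j i h1 h2; exact hC3 _ i h1 h2
    · intro j i h; exact hC4 _ i h
    · intro i c hsum j hj
      have hsum2 : ∑ z : Fin n ⊕ Fin p, (c ∘ finSumFinEquiv) z • v' z i = 0 := by
        rw [← hsum]
        exact Fintype.sum_equiv finSumFinEquiv _ _ (fun z => by simp)
      have := hC5 i (c ∘ finSumFinEquiv) hsum2 (finSumFinEquiv.symm j) hj
      simpa using this
    · intro i
      have hr : (Set.range fun j : Fin (n+p) => v' (finSumFinEquiv.symm j) i)
          = Set.range fun z => v' z i := by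
        ext x
        constructor
        · rintro ⟨j, rfl⟩; exact ⟨finSumFinEquiv.symm j, rfl⟩
        · rintro ⟨z, rfl⟩; exact ⟨finSumFinEquiv z, by simp⟩
      rw [hr]
      exact hC6 i




/-- Gabriel's theorem for the equioriented `A_m` quiver: every finite-dimensional
representation (spaces `V i` at the vertices `i : Fin (m+1)`, linear maps
`f i : V i.castSucc → V i.succ` on the arrows) decomposes as an internal direct sum of
subrepresentations whose dimension vectors are interval vectors `(0,…,0,1,…,1,0,…,0)`,
and in each such summand the maps between adjacent nonzero vertices are isomorphisms. -/
theorem gabriel_Am_decomposition {K : Type*} [Field K] {m : ℕ}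
    (V : Fin (m + 1) → Type*) [∀ i, AddCommGroup (V i)] [∀ i, Module K (V i)]
    [∀ i, FiniteDimensional K (V i)]
    (f : ∀ i : Fin m, V i.castSucc →ₗ[K] V i.succ) :
    ∃ (n : ℕ) (W : Fin n → ∀ i : Fin (m + 1), Submodule K (V i))
      (a b : Fin n → Fin (m + 1)),
      -- at each vertex, the spaces `W j i` form an internal direct sum decomposition of `V i`
      (∀ i : Fin (m + 1), DirectSum.IsInternal (fun j : Fin n => W j i)) ∧
      -- each `W j` is a subrepresentation
      (∀ (j : Fin n) (i : Fin m), (W j i.castSucc).map (f i) ≤ W j i.succ) ∧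
      -- the dimension vector of `W j` is the interval vector supported on `[a j, b j]`
      (∀ j : Fin n, a j ≤ b j) ∧
      (∀ (j : Fin n) (i : Fin (m + 1)), a j ≤ i → i ≤ b j →
        Module.finrank K (W j i) = 1) ∧
      (∀ (j : Fin n) (i : Fin (m + 1)), ¬(a j ≤ i ∧ i ≤ b j) → W j i = ⊥) ∧
      -- between adjacent nonzero vertices, the arrow maps restrict to isomorphisms
      (∀ (j : Fin n) (i : Fin m), a j ≤ i.castSucc → i.succ ≤ b j →
        (W j i.castSucc).map (f i) = W j i.succ ∧
        ∀ x ∈ W j i.castSucc, f i x = 0 → x = 0) := by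
  classical
  obtain ⟨n, a, b, v, hab, hv0, hvne, hchain, hindep, hspan⟩ := chains_exist m V f
  refine ⟨n, fun j i => span K {v j i}, a, b, ?_, ?_, hab, ?_, ?_, ?_⟩
  · intro i
    exact isInternal_span_singleton (fun j => v j i) (hindep i) (hspan i)
  · intro j i
    rw [Submodule.map_span, Set.image_singleton]
    by_cases h : a j ≤ i.castSucc
    · rw [hchain j i h]
    · rw [hv0 j i.castSucc (fun hx => h hx.1), map_zero, span_zero_singleton]
      exact bot_le
  · intro j i h1 h2
    exact finrank_span_singleton (hvne j i h1 h2)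
  · intro j i h
    show span K {v j i} = ⊥
    rw [hv0 j i h, span_zero_singleton]
  · intro j i h1 h2
    have hsucc : a j ≤ i.succ := le_trans h1 (le_of_lt (Fin.castSucc_lt_succ (i := i)))
    constructor
    · rw [Submodule.map_span, Set.image_singleton, hchain j i h1]
    · intro x hx hfx
      rcases mem_span_singleton.mp hx with ⟨c, rfl⟩
      rw [map_smul, hchain j i h1] at hfx
      rcases smul_eq_zero.mp hfx with hc | hv
      · rw [hc, zero_smul]
      · exact absurd hv (hvne j i.succ hsucc h2)
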